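/- Let S be a nonempty set of pairwise coprime natural numbers ≥ 2, let N = ℤ[1/p : p ∈ S] ⊆ ℚ be the subring of ℚ generated by the inverses of elements of S, and let g = gcd{p − 1 : p ∈ S}. Then the quotient group N/gN is isomorphic to ℤ/gℤ. -/

import Mathlib

namespace Stmt3Aux

variable {S : Set ℕ} (g : ℕ)

lemma mem_pos (h2 : ∀ p ∈ S, 2 ≤ p) {m : ℕ} (hm : m ∈ Submonoid.closure S) : 0 < m := by
  induction hm using Submonoid.closure_induction with
  | mem p hp => exact lt_of_lt_of_le two_pos (h2 p hp)
  | one => exact one_pos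
  | mul a b _ _ ha hb => exact Nat.mul_pos ha hb

lemma cast_eq_one (h2 : ∀ p ∈ S, 2 ≤ p) (hgdvd : ∀ p ∈ S, g ∣ p - 1) {m : ℕ}
    (hm : m ∈ Submonoid.closure S) : (m : ZMod g) = 1 := by
  induction hm using Submonoid.closure_induction with
  | mem p hp =>
      obtain ⟨k, hk⟩ := hgdvd p hp
      have hp2 := h2 p hp
      have : p = g * k + 1 := by omega
      subst this
      push_cast
      simp [ZMod.natCast_self]
  | one => simp
  | mul a b _ _ ha hb => push_cast; rw [ha, hb, one_mul]

lemma exists_rep (h2 : ∀ p ∈ S, 2 ≤ p) {x : ℚ}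
    (hx : x ∈ Subring.closure {x : ℚ | ∃ p ∈ S, x = (p : ℚ)⁻¹}) :
    ∃ a : ℤ, ∃ m : ℕ, m ∈ Submonoid.closure S ∧ x * m = a := by
  induction hx using Subring.closure_induction with
  | mem x hx =>
      obtain ⟨p, hp, rfl⟩ := hx
      refine ⟨1, p, Submonoid.subset_closure hp, ?_⟩
      have : (p : ℚ) ≠ 0 := by
        have := h2 p hp; positivity
      field_simp
      simp
  | zero => exact ⟨0, 1, one_mem _, by simp⟩
  | one => exact ⟨1, 1, one_mem _, by simp⟩
  | add x y _ _ hx hy =>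
      obtain ⟨a, m, hm, ha⟩ := hx
      obtain ⟨b, n, hn, hb⟩ := hy
      refine ⟨a * n + b * m, m * n, mul_mem hm hn, ?_⟩
      push_cast
      linear_combination (n : ℚ) * ha + (m : ℚ) * hb
  | neg x _ hx =>
      obtain ⟨a, m, hm, ha⟩ := hx
      exact ⟨-a, m, hm, by push_cast; rw [neg_mul, ha]⟩
  | mul x y _ _ hx hy =>
      obtain ⟨a, m, hm, ha⟩ := hx
      obtain ⟨b, n, hn, hb⟩ := hy
      refine ⟨a * b, m * n, mul_mem hm hn, ?_⟩
      push_cast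
      rw [← ha, ← hb]; ring

lemma inv_mem (hm : ∀ p ∈ S, 2 ≤ p) {m : ℕ} (h : m ∈ Submonoid.closure S) :
    ((m : ℚ)⁻¹) ∈ Subring.closure {x : ℚ | ∃ p ∈ S, x = (p : ℚ)⁻¹} := by
  induction h using Submonoid.closure_induction with
  | mem p hp => exact Subring.subset_closure ⟨p, hp, rfl⟩
  | one => simpa using one_mem _
  | mul a b ha hb iha ihb =>
      push_cast
      rw [mul_inv]
      exact mul_mem iha ihb

noncomputable def phiFun (h2 : ∀ p ∈ S, 2 ≤ p)
    (x : Subring.closure {x : ℚ | ∃ p ∈ S, x = (p : ℚ)⁻¹}) : ZMod g :=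
  ((exists_rep h2 x.2).choose : ZMod g)

lemma phiFun_eq (h2 : ∀ p ∈ S, 2 ≤ p) (hgdvd : ∀ p ∈ S, g ∣ p - 1)
    {x : Subring.closure {x : ℚ | ∃ p ∈ S, x = (p : ℚ)⁻¹}} {a : ℤ} {m : ℕ}
    (hm : m ∈ Submonoid.closure S) (hxa : (x : ℚ) * m = a) :
    phiFun g h2 x = (a : ZMod g) := by
  obtain ⟨n, hn, hxn⟩ := (exists_rep h2 x.2).choose_spec
  set b := (exists_rep h2 x.2).choose with hb
  have key : a * n = b * m := by
    have : ((a * n : ℤ) : ℚ) = ((b * m : ℤ) : ℚ) := by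
      push_cast
      rw [← hxa, ← hxn]; ring
    exact_mod_cast this
  have : (a : ZMod g) * (n : ZMod g) = (b : ZMod g) * (m : ZMod g) := by
    exact_mod_cast congrArg (Int.cast : ℤ → ZMod g) key
  rw [cast_eq_one g h2 hgdvd hn, cast_eq_one g h2 hgdvd hm, mul_one, mul_one] at this
  exact this.symm

noncomputable def phi (h2 : ∀ p ∈ S, 2 ≤ p) (hgdvd : ∀ p ∈ S, g ∣ p - 1) :
    Subring.closure {x : ℚ | ∃ p ∈ S, x = (p : ℚ)⁻¹} →+ ZMod g where
  toFun := phiFun g h2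
  map_zero' := by
    rw [phiFun_eq g h2 hgdvd (a := 0) (m := 1) (one_mem _) (by simp)]; simp
  map_add' x y := by
    show phiFun g h2 (x + y) = phiFun g h2 x + phiFun g h2 y
    obtain ⟨a, m, hm, ha⟩ := exists_rep h2 x.2
    obtain ⟨b, n, hn, hb⟩ := exists_rep h2 y.2
    have hxy : ((x + y : _) : ℚ) * (m * n : ℕ) = ((a * n + b * m : ℤ) : ℚ) := by
      push_cast
      rw [← ha, ← hb]; ring
    rw [phiFun_eq g h2 hgdvd (mul_mem hm hn) hxy, phiFun_eq g h2 hgdvd hm ha,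
      phiFun_eq g h2 hgdvd hn hb]
    push_cast
    rw [cast_eq_one g h2 hgdvd hm, cast_eq_one g h2 hgdvd hn]
    ring

lemma phi_surjective (h2 : ∀ p ∈ S, 2 ≤ p) (hgdvd : ∀ p ∈ S, g ∣ p - 1) :
    Function.Surjective (phi g h2 hgdvd) := by
  intro k
  obtain ⟨a, rfl⟩ := ZMod.intCast_surjective k
  refine ⟨⟨(a : ℚ), intCast_mem _ a⟩, ?_⟩
  exact phiFun_eq g h2 hgdvd (one_mem _) (by push_cast; ring)

lemma ker_eq (h2 : ∀ p ∈ S, 2 ≤ p) (hgdvd : ∀ p ∈ S, g ∣ p - 1) :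
    AddSubgroup.closure {x : Subring.closure {x : ℚ | ∃ p ∈ S, x = (p : ℚ)⁻¹} |
      ∃ y, x = g • y} = (phi g h2 hgdvd).ker := by
  apply le_antisymm
  · rw [AddSubgroup.closure_le]
    rintro x ⟨y, rfl⟩
    obtain ⟨b, n, hn, hb⟩ := exists_rep h2 y.2
    have hx : ((g • y : _) : ℚ) * n = ((g * b : ℤ) : ℚ) := by
      push_cast [nsmul_eq_mul]
      rw [mul_assoc, hb]
    have : phi g h2 hgdvd (g • y) = ((g * b : ℤ) : ZMod g) :=
      phiFun_eq g h2 hgdvd hn hx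
    simp only [AddMonoidHom.mem_ker, SetLike.mem_coe]
    rw [this]
    push_cast
    simp [ZMod.natCast_self]
  · intro x hx
    rw [AddMonoidHom.mem_ker] at hx
    obtain ⟨a, m, hm, ha⟩ := exists_rep h2 x.2
    have h0 : (a : ZMod g) = 0 := by
      have h1 : phi g h2 hgdvd x = (a : ZMod g) := phiFun_eq g h2 hgdvd hm ha
      rw [hx] at h1
      exact h1.symm
    obtain ⟨b, rfl⟩ := (ZMod.intCast_zmod_eq_zero_iff_dvd a g).mp h0
    have hmne : (m : ℚ) ≠ 0 := by
      have := mem_pos h2 hm; positivity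
    refine AddSubgroup.subset_closure ⟨⟨(b : ℚ) * (m : ℚ)⁻¹,
      mul_mem (intCast_mem _ b) (inv_mem h2 hm)⟩, ?_⟩
    ext
    push_cast [nsmul_eq_mul]
    field_simp
    push_cast at ha
    linear_combination ha

end Stmt3Aux

/-- For a nonempty set `S` of pairwise coprime naturals `≥ 2`, `N = ℤ[1/p : p ∈ S] ⊆ ℚ`,
and `g = gcd {p − 1 : p ∈ S}`, the quotient group `N/gN` is isomorphic to `ℤ/gℤ`. -/
theorem stmt_3 (S : Set ℕ) (hS : S.Nonempty) (h2 : ∀ p ∈ S, 2 ≤ p)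
    (hcop : ∀ p ∈ S, ∀ q ∈ S, p ≠ q → Nat.Coprime p q)
    (g : ℕ) (hgdvd : ∀ p ∈ S, g ∣ p - 1)
    (hgmax : ∀ d : ℕ, (∀ p ∈ S, d ∣ p - 1) → d ∣ g)
    (N : Subring ℚ) (hN : N = Subring.closure {x : ℚ | ∃ p ∈ S, x = (p : ℚ)⁻¹}) :
    Nonempty ((N ⧸ AddSubgroup.closure {x : N | ∃ y : N, x = g • y}) ≃+ ZMod g) := by
  subst hN
  refine ⟨?_⟩
  rw [Stmt3Aux.ker_eq g h2 hgdvd]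
  exact QuotientAddGroup.quotientKerEquivOfSurjective _ (Stmt3Aux.phi_surjective g h2 hgdvd)
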